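/- Let c, s, τ be positive integers with 1 ≤ τ ≤ s, set d = c·s and s₁ = max(1, s−1). Let A be an n×d real matrix with no zero rows, and let f : ℝ^d → ℝ be a differentiable convex function such that f(x+h) ≤ f(x) + ⟨∇f(x), h⟩ + (1/2) hᵀAᵀA h for all x, h ∈ ℝ^d. With ω_j, ω'_j, α*_j and D¹_ii as in Theorem 2 of the paper (α*_j = 1 + (τ−1)(ω_j−1)/s₁ + (τ/s − (τ−1)/s₁)·((ω'_j−1)/ω'_j)·ω_j and D¹_ii = ∑_j α*_j A_{ji}²), it holds for all x, h ∈ ℝ^d that the average over all distributed samplings of f(x + h^Ŝ) is at most f(x) + (τ/s)·(⟨∇f(x), h⟩ + (1/2) ∑_{i=1}^d D¹_ii h_i²). -/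

import Mathlib

open Finset

/-- The finite set of all distributed samplings: tuples `S = (S_1,…,S_c)` where
each `S_l` is a `τ`-element subset of the block `{1,…,s}`. -/
def samplings (c s τ : ℕ) : Finset (Fin c → Finset (Fin s)) :=
  Finset.univ.filter fun S => ∀ l, (S l).card = τ

/-- `h^Ŝ`: the vector agreeing with `h` on `Ŝ = {(l,i) : i ∈ S_l}` and `0` elsewhere. -/
def restr {c s : ℕ} (S : Fin c → Finset (Fin s)) (x : Fin c × Fin s → ℝ) :
    Fin c × Fin s → ℝ :=
  fun p => if p.2 ∈ S p.1 then x p else 0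

set_option maxHeartbeats 1600000

lemma samplings_eq (c s τ : ℕ) :
    samplings c s τ
      = Fintype.piFinset (fun _ : Fin c => (univ : Finset (Fin s)).powersetCard τ) := by
  ext S
  simp [samplings, Fintype.mem_piFinset, mem_powersetCard, subset_univ]

lemma card_filter_mem (s τ : ℕ) (hτ : 1 ≤ τ) (i : Fin s) :
    (((univ : Finset (Fin s)).powersetCard τ).filter (fun T => i ∈ T)).card
      = (s-1).choose (τ-1) := by
  rw [show (s-1).choose (τ-1) = (((univ : Finset (Fin s)).erase i).powersetCard (τ-1)).card
      from by rw [card_powersetCard, card_erase_of_mem (mem_univ i), card_univ, Fintype.card_fin]]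
  apply Finset.card_bij (fun T _ => T.erase i)
  · intro T hT
    simp only [mem_filter, mem_powersetCard] at hT
    simp only [mem_powersetCard]
    exact ⟨erase_subset_erase _ hT.1.1, by rw [card_erase_of_mem hT.2, hT.1.2]⟩
  · intro T hT T' hT' hEq
    simp only [mem_filter] at hT hT'
    rw [← insert_erase hT.2, hEq, insert_erase hT'.2]
  · intro T hT
    simp only [mem_powersetCard] at hT
    have hiT : i ∉ T := fun hT' => (notMem_erase i univ) (hT.1 hT')
    refine ⟨insert i T, ?_, by rw [erase_insert hiT]⟩
    simp only [mem_filter, mem_powersetCard]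
    refine ⟨⟨subset_univ _, ?_⟩, mem_insert_self _ _⟩
    rw [card_insert_of_notMem hiT, hT.2]
    omega

lemma card_filter_pair (s τ : ℕ) (i i' : Fin s) (hne : i ≠ i') :
    (((univ : Finset (Fin s)).powersetCard τ).filter (fun T => i ∈ T ∧ i' ∈ T)).card
      = if 2 ≤ τ then (s-2).choose (τ-2) else 0 := by
  by_cases h2 : 2 ≤ τ
  · rw [if_pos h2]
    rw [show (s-2).choose (τ-2)
        = ((((univ : Finset (Fin s)).erase i).erase i').powersetCard (τ-2)).card
      from by
        rw [card_powersetCard, card_erase_of_mem, card_erase_of_mem (mem_univ i),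
          card_univ, Fintype.card_fin]
        · rfl
        · exact mem_erase.2 ⟨hne.symm, mem_univ i'⟩]
    apply Finset.card_bij (fun T _ => (T.erase i).erase i')
    · intro T hT
      simp only [mem_filter, mem_powersetCard] at hT
      simp only [mem_powersetCard]
      refine ⟨erase_subset_erase _ (erase_subset_erase _ hT.1.1), ?_⟩
      rw [card_erase_of_mem (mem_erase.2 ⟨hne.symm, hT.2.2⟩), card_erase_of_mem hT.2.1,
        hT.1.2]
      omega
    · intro T hT T' hT' hEq
      simp only [mem_filter] at hT hT'
      have e1 : ∀ U : Finset (Fin s), i ∈ U → i' ∈ U →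
          insert i (insert i' ((U.erase i).erase i')) = U := by
        intro U h1 h2
        rw [insert_erase (mem_erase.2 ⟨hne.symm, h2⟩), insert_erase h1]
      rw [← e1 T hT.2.1 hT.2.2, hEq, e1 T' hT'.2.1 hT'.2.2]
    · intro T hT
      simp only [mem_powersetCard] at hT
      have hiT : i ∉ T := fun hmem => (notMem_erase i _) (mem_of_mem_erase (hT.1 hmem))
      have hi'T : i' ∉ T := fun hmem => (notMem_erase i' _) (hT.1 hmem)
      have hiT2 : i ∉ insert i' T := by
        simp only [mem_insert]
        rintro (rfl | hmem)
        exacts [hne rfl, hiT hmem]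
      refine ⟨insert i (insert i' T), ?_, ?_⟩
      · simp only [mem_filter, mem_powersetCard]
        refine ⟨⟨subset_univ _, ?_⟩, mem_insert_self _ _,
          mem_insert_of_mem (mem_insert_self _ _)⟩
        rw [card_insert_of_notMem hiT2, card_insert_of_notMem hi'T, hT.2]
        omega
      · rw [erase_insert hiT2, erase_insert hi'T]
  · rw [if_neg h2]
    rw [Finset.card_eq_zero, Finset.filter_eq_empty_iff]
    rintro T hT ⟨h1, h2'⟩
    rw [mem_powersetCard] at hT
    have : ({i, i'} : Finset (Fin s)) ⊆ T := by
      intro a ha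
      simp only [mem_insert, mem_singleton] at ha
      rcases ha with rfl | rfl
      exacts [h1, h2']
    have := Finset.card_le_card this
    rw [Finset.card_pair hne, hT.2] at this
    omega

lemma prod_if_single {c : ℕ} (a : Fin c) (x y : ℝ) :
    (∏ l : Fin c, if a = l then x else y) = x * y^(c-1) := by
  rw [← Finset.mul_prod_erase univ _ (mem_univ a), if_pos rfl]
  congr 1
  rw [Finset.prod_congr rfl (fun l hl => if_neg (fun h => (mem_erase.1 hl).1 h.symm)),
    prod_const, card_erase_of_mem (mem_univ a), card_univ, Fintype.card_fin]

lemma prod_if_pair {c : ℕ} (a b : Fin c) (hab : a ≠ b) (x y z : ℝ) :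
    (∏ l : Fin c, if a = l then x else if b = l then y else z) = x * y * z^(c-2) := by
  rw [show c-2 = c-1-1 from by omega]
  rw [← Finset.mul_prod_erase univ _ (mem_univ a), if_pos rfl]
  rw [← Finset.mul_prod_erase (univ.erase a) _ (mem_erase.2 ⟨hab.symm, mem_univ b⟩)]
  rw [if_neg hab, if_pos rfl, ← mul_assoc]
  congr 1
  have : ∀ l ∈ (univ.erase a).erase b,
      (if a = l then x else if b = l then y else z) = z := by
    intro l hl
    rw [if_neg (fun h => ((mem_erase.1 (mem_of_mem_erase hl)).1) h.symm),
      if_neg (fun h => (mem_erase.1 hl).1 h.symm)]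
  rw [Finset.prod_congr rfl this, prod_const,
    card_erase_of_mem (mem_erase.2 ⟨hab.symm, mem_univ b⟩),
    card_erase_of_mem (mem_univ a), card_univ, Fintype.card_fin]

lemma cnt_eval (c s τ : ℕ) (hτ : 1 ≤ τ) (p q : Fin c × Fin s) :
    (∑ S ∈ samplings c s τ,
      ((if p.2 ∈ S p.1 then (1:ℝ) else 0) * (if q.2 ∈ S q.1 then (1:ℝ) else 0)))
    = if p.1 = q.1 then
        (if p.2 = q.2 then ((s-1).choose (τ-1) : ℝ) * (s.choose τ : ℝ)^(c-1)
          else ((if 2 ≤ τ then (s-2).choose (τ-2) else 0 : ℕ) : ℝ) * (s.choose τ : ℝ)^(c-1))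
      else ((s-1).choose (τ-1) : ℝ)^2 * (s.choose τ : ℝ)^(c-2) := by
  classical
  rw [samplings_eq]
  set K := (univ : Finset (Fin s)).powersetCard τ with hK
  have hKcard : (K.card : ℝ) = (s.choose τ : ℝ) := by
    rw [hK, card_powersetCard, card_univ, Fintype.card_fin]
  have step : ∀ S : Fin c → Finset (Fin s),
      ((if p.2 ∈ S p.1 then (1:ℝ) else 0) * (if q.2 ∈ S q.1 then (1:ℝ) else 0))
      = ∏ l : Fin c, ((if p.1 = l then (if p.2 ∈ S l then (1:ℝ) else 0) else 1)
          * (if q.1 = l then (if q.2 ∈ S l then (1:ℝ) else 0) else 1)) := by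
    intro S
    rw [prod_mul_distrib, Finset.prod_ite_eq, Finset.prod_ite_eq,
      if_pos (mem_univ p.1), if_pos (mem_univ q.1)]
  rw [Finset.sum_congr rfl (fun S _ => step S),
    ← Finset.prod_univ_sum (fun _ : Fin c => K)
      (fun l T => (if p.1 = l then (if p.2 ∈ T then (1:ℝ) else 0) else 1)
        * (if q.1 = l then (if q.2 ∈ T then (1:ℝ) else 0) else 1))]
  by_cases hlq : p.1 = q.1
  · by_cases hiq : p.2 = q.2
    · rw [if_pos hlq, if_pos hiq]
      have hw : ∀ l : Fin c,
          (∑ T ∈ K, ((if p.1 = l then (if p.2 ∈ T then (1:ℝ) else 0) else 1)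
            * (if q.1 = l then (if q.2 ∈ T then (1:ℝ) else 0) else 1)))
          = if p.1 = l then ((s-1).choose (τ-1) : ℝ) else (s.choose τ : ℝ) := by
        intro l
        by_cases hl : p.1 = l
        · rw [if_pos hl]
          have : ∀ T ∈ K, ((if p.1 = l then (if p.2 ∈ T then (1:ℝ) else 0) else 1)
              * (if q.1 = l then (if q.2 ∈ T then (1:ℝ) else 0) else 1))
              = if p.2 ∈ T then (1:ℝ) else 0 := by
            intro T _
            rw [if_pos hl, if_pos (show q.1 = l from hlq.symm.trans hl), ← hiq]
            by_cases hm : p.2 ∈ T <;> simp [hm]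
          rw [Finset.sum_congr rfl this, Finset.sum_boole, ← card_filter_mem s τ hτ p.2]
        · rw [if_neg hl]
          have : ∀ T ∈ K, ((if p.1 = l then (if p.2 ∈ T then (1:ℝ) else 0) else 1)
              * (if q.1 = l then (if q.2 ∈ T then (1:ℝ) else 0) else 1)) = 1 := by
            intro T _
            rw [if_neg hl, if_neg (show ¬q.1 = l from fun h => hl (hlq.trans h)), mul_one]
          rw [Finset.sum_congr rfl this, Finset.sum_const, nsmul_eq_mul, mul_one, hKcard]
      rw [Finset.prod_congr rfl (fun l _ => hw l), prod_if_single]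
    · rw [if_pos hlq, if_neg hiq]
      have hw : ∀ l : Fin c,
          (∑ T ∈ K, ((if p.1 = l then (if p.2 ∈ T then (1:ℝ) else 0) else 1)
            * (if q.1 = l then (if q.2 ∈ T then (1:ℝ) else 0) else 1)))
          = if p.1 = l then ((if 2 ≤ τ then (s-2).choose (τ-2) else 0 : ℕ) : ℝ)
            else (s.choose τ : ℝ) := by
        intro l
        by_cases hl : p.1 = l
        · rw [if_pos hl]
          have : ∀ T ∈ K, ((if p.1 = l then (if p.2 ∈ T then (1:ℝ) else 0) else 1)
              * (if q.1 = l then (if q.2 ∈ T then (1:ℝ) else 0) else 1))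
              = if p.2 ∈ T ∧ q.2 ∈ T then (1:ℝ) else 0 := by
            intro T _
            rw [if_pos hl, if_pos (show q.1 = l from hlq.symm.trans hl)]
            by_cases h1 : p.2 ∈ T <;> by_cases h2 : q.2 ∈ T <;> simp [h1, h2]
          rw [Finset.sum_congr rfl this, Finset.sum_boole,
            ← card_filter_pair s τ p.2 q.2 hiq]
        · rw [if_neg hl]
          have : ∀ T ∈ K, ((if p.1 = l then (if p.2 ∈ T then (1:ℝ) else 0) else 1)
              * (if q.1 = l then (if q.2 ∈ T then (1:ℝ) else 0) else 1)) = 1 := by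
            intro T _
            rw [if_neg hl, if_neg (show ¬q.1 = l from fun h => hl (hlq.trans h)), mul_one]
          rw [Finset.sum_congr rfl this, Finset.sum_const, nsmul_eq_mul, mul_one, hKcard]
      rw [Finset.prod_congr rfl (fun l _ => hw l), prod_if_single]
  · rw [if_neg hlq]
    have hw : ∀ l : Fin c,
        (∑ T ∈ K, ((if p.1 = l then (if p.2 ∈ T then (1:ℝ) else 0) else 1)
          * (if q.1 = l then (if q.2 ∈ T then (1:ℝ) else 0) else 1)))
        = if p.1 = l then ((s-1).choose (τ-1) : ℝ)
          else if q.1 = l then ((s-1).choose (τ-1) : ℝ) else (s.choose τ : ℝ) := by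
      intro l
      by_cases hl : p.1 = l
      · rw [if_pos hl]
        have : ∀ T ∈ K, ((if p.1 = l then (if p.2 ∈ T then (1:ℝ) else 0) else 1)
            * (if q.1 = l then (if q.2 ∈ T then (1:ℝ) else 0) else 1))
            = if p.2 ∈ T then (1:ℝ) else 0 := by
          intro T _
          rw [if_pos hl, if_neg (show ¬q.1 = l from fun h => hlq (hl.trans h.symm)), mul_one]
        rw [Finset.sum_congr rfl this, Finset.sum_boole, ← card_filter_mem s τ hτ p.2]
      · rw [if_neg hl]
        by_cases hl' : q.1 = l
        · rw [if_pos hl']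
          have : ∀ T ∈ K, ((if p.1 = l then (if p.2 ∈ T then (1:ℝ) else 0) else 1)
              * (if q.1 = l then (if q.2 ∈ T then (1:ℝ) else 0) else 1))
              = if q.2 ∈ T then (1:ℝ) else 0 := by
            intro T _
            rw [if_neg hl, if_pos hl', one_mul]
          rw [Finset.sum_congr rfl this, Finset.sum_boole, ← card_filter_mem s τ hτ q.2]
        · rw [if_neg hl']
          have : ∀ T ∈ K, ((if p.1 = l then (if p.2 ∈ T then (1:ℝ) else 0) else 1)
              * (if q.1 = l then (if q.2 ∈ T then (1:ℝ) else 0) else 1)) = 1 := by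
            intro T _
            rw [if_neg hl, if_neg hl', mul_one]
          rw [Finset.sum_congr rfl this, Finset.sum_const, nsmul_eq_mul, mul_one, hKcard]
    rw [Finset.prod_congr rfl (fun l _ => hw l), prod_if_pair p.1 q.1 hlq, sq]

lemma sq_sum_expand (c s τ : ℕ) (hτ : 1 ≤ τ) (g : Fin c × Fin s → ℝ) :
    ∑ S ∈ samplings c s τ, (∑ p : Fin c × Fin s, restr S g p)^2
    = ((s-1).choose (τ-1) : ℝ) * (s.choose τ : ℝ)^(c-1) * (∑ p : Fin c × Fin s, g p ^ 2)
      + ((if 2 ≤ τ then (s-2).choose (τ-2) else 0 : ℕ) : ℝ) * (s.choose τ : ℝ)^(c-1)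
          * ((∑ l : Fin c, (∑ i : Fin s, g (l,i))^2) - ∑ p : Fin c × Fin s, g p ^ 2)
      + ((s-1).choose (τ-1) : ℝ)^2 * (s.choose τ : ℝ)^(c-2)
          * ((∑ p : Fin c × Fin s, g p)^2 - ∑ l : Fin c, (∑ i : Fin s, g (l,i))^2) := by
  classical
  set a1 := ((s-1).choose (τ-1) : ℝ) * (s.choose τ : ℝ)^(c-1) with ha1
  set a2 := ((if 2 ≤ τ then (s-2).choose (τ-2) else 0 : ℕ) : ℝ) * (s.choose τ : ℝ)^(c-1)
    with ha2
  set a3 := ((s-1).choose (τ-1) : ℝ)^2 * (s.choose τ : ℝ)^(c-2) with ha3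
  have hrs : ∀ (S : Fin c → Finset (Fin s)) (p : Fin c × Fin s),
      restr S g p = g p * (if p.2 ∈ S p.1 then (1:ℝ) else 0) := by
    intro S p
    by_cases hm : p.2 ∈ S p.1 <;> simp [restr, hm]
  have step1 : ∑ S ∈ samplings c s τ, (∑ p : Fin c × Fin s, restr S g p)^2
      = ∑ p : Fin c × Fin s, ∑ q : Fin c × Fin s, (g p * g q) *
          (∑ S ∈ samplings c s τ,
            ((if p.2 ∈ S p.1 then (1:ℝ) else 0) * (if q.2 ∈ S q.1 then (1:ℝ) else 0))) := by
    have e1 : ∀ S : Fin c → Finset (Fin s), (∑ p : Fin c × Fin s, restr S g p)^2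
        = ∑ p : Fin c × Fin s, ∑ q : Fin c × Fin s, (g p * g q) *
            ((if p.2 ∈ S p.1 then (1:ℝ) else 0) * (if q.2 ∈ S q.1 then (1:ℝ) else 0)) := by
      intro S
      rw [sq, Finset.sum_mul_sum]
      exact Finset.sum_congr rfl fun p _ => Finset.sum_congr rfl fun q _ => by
        rw [hrs, hrs]; ring
    rw [Finset.sum_congr rfl fun S _ => e1 S, Finset.sum_comm]
    refine Finset.sum_congr rfl fun p _ => ?_
    rw [Finset.sum_comm]
    exact Finset.sum_congr rfl fun q _ => (Finset.mul_sum _ _ _).symm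
  rw [step1,
    Finset.sum_congr rfl fun p _ => Finset.sum_congr rfl fun q _ => by
      rw [cnt_eval c s τ hτ p q]]
  have key : ∀ p q : Fin c × Fin s,
      (g p * g q) * (if p.1 = q.1 then
          (if p.2 = q.2 then a1 else a2) else a3)
      = a3 * (g p * g q) + (a2 - a3) * (if p.1 = q.1 then g p * g q else 0)
        + (a1 - a2) * (if p = q then g p * g q else 0) := by
    intro p q
    by_cases h1 : p.1 = q.1
    · by_cases h2 : p.2 = q.2
      · have hpq : p = q := Prod.ext h1 h2
        simp only [if_pos h1, if_pos h2, if_pos hpq]; ring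
      · have hpq : p ≠ q := fun h => h2 (by rw [h])
        simp only [if_pos h1, if_neg h2, if_neg hpq]; ring
    · have hpq : p ≠ q := fun h => h1 (by rw [h])
      simp only [if_neg h1, if_neg hpq]; ring
  rw [Finset.sum_congr rfl fun p _ => Finset.sum_congr rfl fun q _ => key p q]
  have SA : ∑ p : Fin c × Fin s, ∑ q : Fin c × Fin s, (if p = q then g p * g q else 0)
      = ∑ p : Fin c × Fin s, g p ^ 2 := by
    refine Finset.sum_congr rfl fun p _ => ?_
    rw [Finset.sum_ite_eq, if_pos (mem_univ p), sq]
  have SB : ∑ p : Fin c × Fin s, ∑ q : Fin c × Fin s, (if p.1 = q.1 then g p * g q else 0)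
      = ∑ l : Fin c, (∑ i : Fin s, g (l,i))^2 := by
    have inner : ∀ p : Fin c × Fin s,
        ∑ q : Fin c × Fin s, (if p.1 = q.1 then g p * g q else 0)
        = g p * ∑ i' : Fin s, g (p.1, i') := by
      intro p
      rw [Fintype.sum_prod_type]
      rw [Finset.sum_eq_single p.1]
      · rw [Finset.mul_sum]
        exact Finset.sum_congr rfl fun i' _ => by rw [if_pos rfl]
      · intro l' _ hne
        apply Finset.sum_eq_zero
        intro i' _
        rw [if_neg (fun h => hne h.symm)]
      · intro habs
        exact absurd (mem_univ p.1) habs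
    rw [Finset.sum_congr rfl fun p _ => inner p, Fintype.sum_prod_type]
    refine Finset.sum_congr rfl fun l _ => ?_
    have : ∀ y : Fin s, g (l,y) * (∑ i' : Fin s, g ((l,y).1, i'))
        = g (l,y) * (∑ i' : Fin s, g (l, i')) := fun y => rfl
    rw [Finset.sum_congr rfl fun y _ => this y, sq, ← Finset.sum_mul]
  simp only [Finset.sum_add_distrib, ← Finset.mul_sum]
  rw [SA, SB, ← Finset.sum_mul, ← sq]
  ring

lemma m1_ratio (s τ : ℕ) (hτ : 1 ≤ τ) (hτs : τ ≤ s) :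
    ((s-1).choose (τ-1) : ℝ) * s = τ * (s.choose τ : ℝ) := by
  have h := Nat.add_one_mul_choose_eq (s-1) (τ-1)
  rw [Nat.sub_add_cancel (hτ.trans hτs),
    Nat.sub_add_cancel hτ] at h
  have h' : ((s:ℝ)) * ((s-1).choose (τ-1) : ℝ) = (s.choose τ : ℝ) * τ := by exact_mod_cast h
  linarith

lemma m2_ratio (s τ : ℕ) (hτ : 1 ≤ τ) (hτs : τ ≤ s) :
    (((if 2 ≤ τ then (s-2).choose (τ-2) else 0 : ℕ)) : ℝ) * ((s:ℝ) * ((max 1 (s-1) : ℕ) : ℝ))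
    = (τ:ℝ) * ((τ:ℝ)-1) * (s.choose τ : ℝ) := by
  by_cases h2 : 2 ≤ τ
  · have hs2 : 2 ≤ s := h2.trans hτs
    have hs1 : (1:ℕ) ≤ s := by omega
    have hmax : (max 1 (s-1)) = s-1 := max_eq_right (by omega)
    have ha := Nat.add_one_mul_choose_eq (s-2) (τ-2)
    rw [show s-2+1 = s-1 by omega,
      show τ-2+1 = τ-1 by omega] at ha
    have hb := Nat.add_one_mul_choose_eq (s-1) (τ-1)
    rw [Nat.sub_add_cancel (hτ.trans hτs),
      Nat.sub_add_cancel hτ] at hb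
    have ha' : ((s:ℝ)-1) * ((s-2).choose (τ-2) : ℝ)
        = ((s-1).choose (τ-1) : ℝ) * ((τ:ℝ)-1) := by
      have h0 : (((s-1) * (s-2).choose (τ-2) : ℕ) : ℝ)
          = (((s-1).choose (τ-1) * (τ-1) : ℕ) : ℝ) := by exact_mod_cast congrArg Nat.cast ha
      push_cast [Nat.cast_sub hs1, Nat.cast_sub hτ] at h0
      linarith
    have hb' : ((s:ℝ)) * ((s-1).choose (τ-1) : ℝ) = (s.choose τ : ℝ) * (τ:ℝ) := by
      exact_mod_cast hb
    rw [if_pos h2, hmax, Nat.cast_sub hs1]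
    push_cast
    linear_combination (s:ℝ) * ha' + ((τ:ℝ)-1) * hb'
  · have hτ1 : τ = 1 := by omega
    rw [if_neg h2, hτ1]
    norm_num

lemma coeff_ineq (s τ : ℕ) (hs : 0 < s) (hτ : 1 ≤ τ) (hτs : τ ≤ s) :
    ((τ:ℝ)-1) * s ≤ (τ:ℝ) * ((max 1 (s-1) : ℕ) : ℝ) := by
  by_cases h1 : s = 1
  · have : τ = 1 := by omega
    subst h1 this; norm_num
  · have hs2 : 2 ≤ s := by omega
    rw [max_eq_right (show 1 ≤ s - 1 by omega), Nat.cast_sub (show 1 ≤ s by omega)]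
    have h1 : (1:ℝ) ≤ (τ:ℝ) := by exact_mod_cast hτ
    have h2 : (τ:ℝ) ≤ (s:ℝ) := by exact_mod_cast hτs
    push_cast
    nlinarith

lemma row_bound (c s τ : ℕ) (hc : 0 < c) (hs : 0 < s) (hτ : 1 ≤ τ) (hτs : τ ≤ s)
    (g : Fin c × Fin s → ℝ) (W W' : ℕ) (hW' : 1 ≤ W')
    (P : Finset (Fin c × Fin s)) (hPcard : P.card = W)
    (hP : ∀ p, g p ≠ 0 → p ∈ P)
    (L : Finset (Fin c)) (hLcard : L.card = W')
    (hL : ∀ p : Fin c × Fin s, g p ≠ 0 → p.1 ∈ L) :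
    ∑ S ∈ samplings c s τ, (∑ p : Fin c × Fin s, restr S g p)^2
      ≤ (s.choose τ : ℝ)^c * ((τ:ℝ)/(s:ℝ)) *
        (1 + ((τ:ℝ)-1)*((W:ℝ)-1)/((max 1 (s-1) : ℕ):ℝ)
          + ((τ:ℝ)/(s:ℝ) - ((τ:ℝ)-1)/((max 1 (s-1):ℕ):ℝ)) * (((W':ℝ)-1)/(W':ℝ)) * (W:ℝ))
        * ∑ p : Fin c × Fin s, g p ^ 2 := by
  classical
  set s₁ : ℝ := ((max 1 (s-1) : ℕ) : ℝ) with hs₁def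
  set N : ℝ := (s.choose τ : ℝ) with hNdef
  set m1 : ℝ := ((s-1).choose (τ-1) : ℝ) with hm1def
  set m2 : ℝ := (((if 2 ≤ τ then (s-2).choose (τ-2) else 0 : ℕ)) : ℝ) with hm2def
  set Q : ℝ := ∑ p : Fin c × Fin s, g p ^ 2 with hQdef
  set SG : ℝ := ∑ l : Fin c, (∑ i : Fin s, g (l,i))^2 with hSGdef
  set TG : ℝ := ∑ p : Fin c × Fin s, g p with hTGdef
  have hNpos : 0 < N := by
    rw [hNdef]; exact_mod_cast Nat.choose_pos hτs
  have hs1pos : (0:ℝ) < s₁ := by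
    rw [hs₁def]; exact_mod_cast lt_of_lt_of_le one_pos (le_max_left 1 (s-1))
  have hsR : (0:ℝ) < (s:ℝ) := by exact_mod_cast hs
  have hτR : (1:ℝ) ≤ (τ:ℝ) := by exact_mod_cast hτ
  have hW'R : (1:ℝ) ≤ (W':ℝ) := by exact_mod_cast hW'
  have hQ0 : 0 ≤ Q := Finset.sum_nonneg fun p _ => sq_nonneg _
  have hSG0 : 0 ≤ SG := Finset.sum_nonneg fun l _ => sq_nonneg _
  have hm1 : m1 * s = τ * N := m1_ratio s τ hτ hτs
  have hm2 : m2 * ((s:ℝ) * s₁) = (τ:ℝ) * ((τ:ℝ)-1) * N := m2_ratio s τ hτ hτs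
  have hm2' : 0 ≤ m2 := by rw [hm2def]; positivity
  have hcoeff := coeff_ineq s τ hs hτ hτs
  -- CS1 : TG^2 ≤ W * Q
  have CS1 : TG^2 ≤ (W:ℝ) * Q := by
    have hTG : TG = ∑ p ∈ P, g p := by
      rw [hTGdef]
      exact (Finset.sum_subset (subset_univ P) (fun p _ hp => by
        by_contra hne; exact hp (hP p hne))).symm
    calc TG^2 = (∑ p ∈ P, g p)^2 := by rw [hTG]
      _ ≤ (P.card : ℝ) * ∑ p ∈ P, g p ^ 2 := sq_sum_le_card_mul_sum_sq
      _ ≤ (W:ℝ) * Q := by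
          rw [hPcard]
          exact mul_le_mul_of_nonneg_left
            (Finset.sum_le_sum_of_subset_of_nonneg (subset_univ P)
              (fun p _ _ => sq_nonneg _)) (by positivity)
  -- CS2 : TG^2 ≤ W' * SG
  have CS2 : TG^2 ≤ (W':ℝ) * SG := by
    have hTG : TG = ∑ l ∈ L, (∑ i : Fin s, g (l,i)) := by
      rw [hTGdef, Fintype.sum_prod_type]
      exact (Finset.sum_subset (subset_univ L) (fun l _ hl =>
        Finset.sum_eq_zero fun i _ => by
          by_contra hne; exact hl (hL (l,i) hne))).symm
    calc TG^2 = (∑ l ∈ L, (∑ i : Fin s, g (l,i)))^2 := by rw [hTG]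
      _ ≤ (L.card : ℝ) * ∑ l ∈ L, (∑ i : Fin s, g (l,i))^2 :=
          sq_sum_le_card_mul_sum_sq
      _ ≤ (W':ℝ) * SG := by
          rw [hLcard]
          exact mul_le_mul_of_nonneg_left
            (Finset.sum_le_sum_of_subset_of_nonneg (subset_univ L)
              (fun l _ _ => sq_nonneg _)) (by positivity)
  have hexp := sq_sum_expand c s τ hτ g
  rw [← hNdef, ← hm1def, ← hm2def, ← hQdef, ← hSGdef, ← hTGdef] at hexp
  rw [hexp]
  -- abbreviations
  have hm1nn : 0 ≤ m1 := by rw [hm1def]; positivity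
  have hNnn : 0 ≤ N := le_of_lt hNpos
  have hm2m1 : m2 * N ≤ m1^2 := by
    have key : m2 * N * ((s:ℝ) * s₁ * s) ≤ m1^2 * ((s:ℝ) * s₁ * s) := by
      have e1 : m2 * N * ((s:ℝ) * s₁ * s) = ((τ:ℝ) * ((τ:ℝ)-1) * N) * ((s:ℝ) * N) := by
        linear_combination N * (s:ℝ) * hm2
      have e2 : m1^2 * ((s:ℝ) * s₁ * s) = ((τ:ℝ) * N) * ((τ:ℝ) * N) * s₁ := by
        linear_combination (m1 * (s:ℝ) + (τ:ℝ) * N) * s₁ * hm1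
      rw [e1, e2]
      have h3 := mul_le_mul_of_nonneg_left hcoeff
        (show (0:ℝ) ≤ (τ:ℝ) * N^2 by positivity)
      nlinarith [h3]
    exact le_of_mul_le_mul_right key (by positivity)
  have hfrac : ((τ:ℝ)-1)/s₁ ≤ (τ:ℝ)/(s:ℝ) := by
    rw [div_le_div_iff₀ hs1pos hsR]
    exact hcoeff
  have hW'0 : (0:ℝ) < (W':ℝ) := by linarith
  have hWfrac : (0:ℝ) ≤ ((W':ℝ)-1)/(W':ℝ) := by
    apply div_nonneg _ hW'0.le
    linarith
  have hWnn : (0:ℝ) ≤ (W:ℝ) := Nat.cast_nonneg W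
  have A1 : m1 * N^(c-1) = ((τ:ℝ)/(s:ℝ)) * N^c := by
    have hNc : N^c = N^(c-1) * N := by
      rw [← pow_succ]
      congr 1
      omega
    rw [hNc]
    field_simp
    linear_combination hm1
  have A2 : m2 * N^(c-1) = ((τ:ℝ)/(s:ℝ)) * (((τ:ℝ)-1)/s₁) * N^c := by
    have hNc : N^c = N^(c-1) * N := by
      rw [← pow_succ]
      congr 1
      omega
    rw [hNc]
    field_simp
    linear_combination hm2
  have hX : TG^2 - Q ≤ ((W:ℝ)-1) * Q := by nlinarith [CS1]
  have hYb : TG^2 - SG ≤ ((W':ℝ)-1)/(W':ℝ) * ((W:ℝ)*Q) := by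
    rw [div_mul_eq_mul_div, le_div_iff₀ hW'0]
    nlinarith [CS2, mul_le_mul_of_nonneg_left CS1 (show (0:ℝ) ≤ (W':ℝ)-1 by linarith)]
  have ha2nn : (0:ℝ) ≤ m2 * N^(c-1) := by positivity
  have ha32 : m2 * N^(c-1) ≤ m1^2 * N^(c-2) := by
    by_cases hcc : 2 ≤ c
    · have hNc : N^(c-1) = N^(c-2) * N := by
        rw [← pow_succ]
        congr 1
        omega
      rw [hNc, ← mul_assoc, mul_comm m2 (N^(c-2)), mul_assoc, mul_comm (m1^2) (N^(c-2))]
      exact mul_le_mul_of_nonneg_left hm2m1 (by positivity)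
    · have hc1 : c = 1 := by omega
      subst hc1
      norm_num
      have hN1 : (1:ℝ) ≤ N := by
        rw [hNdef]
        exact_mod_cast Nat.one_le_iff_ne_zero.2 (Nat.choose_pos hτs).ne'
      nlinarith [hm2m1, hm2']
  by_cases hcc : 2 ≤ c
  · have A3 : m1^2 * N^(c-2) = ((τ:ℝ)/(s:ℝ))^2 * N^c := by
      have hNc : N^c = N^(c-2) * N^2 := by
        rw [← pow_add]
        congr 1
        omega
      rw [hNc]
      field_simp
      linear_combination (m1 * (s:ℝ) + (τ:ℝ) * N) * hm1
    calc m1 * N^(c-1) * Q + m2 * N^(c-1) * (SG - Q) + m1^2 * N^(c-2) * (TG^2 - SG)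
        = m1 * N^(c-1) * Q + m2 * N^(c-1) * (TG^2 - Q)
          + (m1^2 * N^(c-2) - m2 * N^(c-1)) * (TG^2 - SG) := by ring
      _ ≤ m1 * N^(c-1) * Q + m2 * N^(c-1) * (((W:ℝ)-1) * Q)
          + (m1^2 * N^(c-2) - m2 * N^(c-1)) * (((W':ℝ)-1)/(W':ℝ) * ((W:ℝ)*Q)) := by
          gcongr ?_ + ?_ + ?_
          · exact le_refl _
          · exact mul_le_mul_of_nonneg_left hX ha2nn
          · exact mul_le_mul_of_nonneg_left hYb (by linarith)
      _ = N^c * ((τ:ℝ)/(s:ℝ)) *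
          (1 + ((τ:ℝ)-1)*((W:ℝ)-1)/s₁
            + ((τ:ℝ)/(s:ℝ) - ((τ:ℝ)-1)/s₁) * (((W':ℝ)-1)/(W':ℝ)) * (W:ℝ)) * Q := by
          rw [A1, A2, A3]
          field_simp
  · have hc1 : c = 1 := by omega
    subst hc1
    have hSG' : SG = TG^2 := by
      rw [hSGdef, hTGdef, Fintype.sum_prod_type, Fin.sum_univ_one, Fin.sum_univ_one]
    have step : m1 * N^(1-1) * Q + m2 * N^(1-1) * (SG - Q) + m1^2 * N^(1-2) * (TG^2 - SG)
        ≤ m1 * N^(1-1) * Q + m2 * N^(1-1) * (((W:ℝ)-1) * Q) := by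
      rw [hSG']
      have : TG^2 - TG^2 = 0 := by ring
      rw [this, mul_zero, add_zero]
      have := mul_le_mul_of_nonneg_left hX ha2nn
      linarith
    have eq1 : m1 * N^(1-1) * Q + m2 * N^(1-1) * (((W:ℝ)-1) * Q)
        = N^1 * ((τ:ℝ)/(s:ℝ)) * (1 + ((τ:ℝ)-1)*((W:ℝ)-1)/s₁) * Q := by
      rw [A1, A2]
      field_simp
    have pos3 : (0:ℝ) ≤ N^1 * ((τ:ℝ)/(s:ℝ)) *
        ((((τ:ℝ)/(s:ℝ)) - ((τ:ℝ)-1)/s₁) * (((W':ℝ)-1)/(W':ℝ)) * (W:ℝ)) * Q := by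
      apply mul_nonneg _ hQ0
      apply mul_nonneg (by positivity)
      apply mul_nonneg (mul_nonneg (by linarith) hWfrac) hWnn
    calc m1 * N^(1-1) * Q + m2 * N^(1-1) * (SG - Q) + m1^2 * N^(1-2) * (TG^2 - SG)
        ≤ m1 * N^(1-1) * Q + m2 * N^(1-1) * (((W:ℝ)-1) * Q) := step
      _ ≤ N^1 * ((τ:ℝ)/(s:ℝ)) *
          (1 + ((τ:ℝ)-1)*((W:ℝ)-1)/s₁
            + ((τ:ℝ)/(s:ℝ) - ((τ:ℝ)-1)/s₁) * (((W':ℝ)-1)/(W':ℝ)) * (W:ℝ)) * Q := by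
          rw [eq1]
          nlinarith [pos3]

/-- Theorem 2 of the paper: the full ESO for the new stepsizes `D¹`.
Coordinates are indexed by `(l,i) ∈ Fin c × Fin s`, `d = c·s`, `s₁ = max(1,s−1)`.
Let `f : ℝ^d → ℝ` be differentiable and convex with
`f(x+h) ≤ f(x) + ⟨∇f(x),h⟩ + (1/2) hᵀAᵀAh`, where the `n×d` matrix `A` has no
zero rows.  With `ω_j, ω'_j, α*_j` and `D¹_ii = ∑_j α*_j A_{ji}²` as in the
paper, for all `x, h ∈ ℝ^d` the average over all distributed samplings of
`f(x + h^Ŝ)` is at most `f(x) + (τ/s)·(⟨∇f(x),h⟩ + (1/2)·∑_i D¹_ii h_i²)`. -/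
theorem stmt_6 (c s τ : ℕ) (hc : 0 < c) (hs : 0 < s) (hτ : 1 ≤ τ) (hτs : τ ≤ s)
    (n : ℕ) (A : Matrix (Fin n) (Fin c × Fin s) ℝ)
    (hrows : ∀ j : Fin n, ∃ p : Fin c × Fin s, A j p ≠ 0)
    (f : (Fin c × Fin s → ℝ) → ℝ)
    (hdiff : Differentiable ℝ f)
    (hconv : ConvexOn ℝ Set.univ f)
    (hquad : ∀ x h : Fin c × Fin s → ℝ,
      f (x + h) ≤ f x + fderiv ℝ f x h +
        (1 / 2) * ∑ j : Fin n, (∑ p : Fin c × Fin s, A j p * h p) ^ 2)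
    (ω ω' : Fin n → ℕ)
    (hω : ∀ j, ω j = (Finset.univ.filter fun p : Fin c × Fin s => A j p ≠ 0).card)
    (hω' : ∀ j, ω' j = (Finset.univ.filter fun l : Fin c => ∃ i : Fin s, A j (l, i) ≠ 0).card)
    (x h : Fin c × Fin s → ℝ) :
    (∑ S ∈ samplings c s τ, f (x + restr S h)) / ((s.choose τ : ℝ) ^ c) ≤
      f x + ((τ : ℝ) / (s : ℝ)) *
        (fderiv ℝ f x h +
          (1 / 2) * ∑ p : Fin c × Fin s,
            (∑ j : Fin n,
              (1 + ((τ : ℝ) - 1) * ((ω j : ℝ) - 1) / ((max 1 (s - 1) : ℕ) : ℝ)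
                + ((τ : ℝ) / (s : ℝ) - ((τ : ℝ) - 1) / ((max 1 (s - 1) : ℕ) : ℝ)) *
                    (((ω' j : ℝ) - 1) / (ω' j : ℝ)) * (ω j : ℝ)) * (A j p) ^ 2) *
            (h p) ^ 2) := by
  classical
  set L := fderiv ℝ f x with hLdef
  set N : ℝ := (s.choose τ : ℝ) with hNdef
  have hNpos : 0 < N := by rw [hNdef]; exact_mod_cast Nat.choose_pos hτs
  have hNcpos : 0 < N^c := pow_pos hNpos c
  rw [div_le_iff₀ hNcpos]
  set g : Fin n → Fin c × Fin s → ℝ := fun j p => A j p * h p with hgdef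
  set α : Fin n → ℝ := fun j =>
    (1 + ((τ : ℝ) - 1) * ((ω j : ℝ) - 1) / ((max 1 (s - 1) : ℕ) : ℝ)
      + ((τ : ℝ) / (s : ℝ) - ((τ : ℝ) - 1) / ((max 1 (s - 1) : ℕ) : ℝ)) *
          (((ω' j : ℝ) - 1) / (ω' j : ℝ)) * (ω j : ℝ)) with hαdef
  have hcard : ((samplings c s τ).card : ℝ) = N^c := by
    rw [samplings_eq, Fintype.card_piFinset]
    simp [card_powersetCard, hNdef]
  have hm1Nc : ((s-1).choose (τ-1) : ℝ) * N^(c-1) = ((τ:ℝ)/(s:ℝ)) * N^c := by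
    have hNc : N^c = N^(c-1) * N := by
      rw [← pow_succ]; congr 1; omega
    have hsR : (0:ℝ) < (s:ℝ) := by exact_mod_cast hs
    rw [hNc]
    field_simp
    linear_combination m1_ratio s τ hτ hτs
  -- step 1: pointwise quadratic bound
  have hstep : ∑ S ∈ samplings c s τ, f (x + restr S h)
      ≤ ∑ S ∈ samplings c s τ, (f x + L (restr S h)
          + (1/2) * ∑ j : Fin n, (∑ p : Fin c × Fin s, A j p * restr S h p)^2) :=
    Finset.sum_le_sum fun S _ => hquad x (restr S h)
  -- term 1
  have term1 : ∑ S ∈ samplings c s τ, f x = N^c * f x := by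
    rw [Finset.sum_const, nsmul_eq_mul, hcard]
  -- term 2
  have hsumrestr : ∑ S ∈ samplings c s τ, restr S h = (((τ:ℝ)/(s:ℝ)) * N^c) • h := by
    funext p
    rw [Finset.sum_apply]
    have hre : ∀ S : Fin c → Finset (Fin s),
        restr S h p = h p * ((if p.2 ∈ S p.1 then (1:ℝ) else 0)
          * (if p.2 ∈ S p.1 then (1:ℝ) else 0)) := by
      intro S
      by_cases hm : p.2 ∈ S p.1 <;> simp [restr, hm]
    rw [Finset.sum_congr rfl fun S _ => hre S, ← Finset.mul_sum,
      cnt_eval c s τ hτ p p, if_pos rfl, if_pos rfl, hm1Nc]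
    simp [mul_comm]
  have term2 : ∑ S ∈ samplings c s τ, L (restr S h) = ((τ:ℝ)/(s:ℝ)) * N^c * L h := by
    rw [← map_sum L (fun S => restr S h) (samplings c s τ), hsumrestr, map_smul,
      smul_eq_mul]
  -- term 3 : row bounds
  have hrowj : ∀ j : Fin n,
      ∑ S ∈ samplings c s τ, (∑ p : Fin c × Fin s, A j p * restr S h p)^2
        ≤ N^c * ((τ:ℝ)/(s:ℝ)) * α j * ∑ p : Fin c × Fin s, (g j p)^2 := by
    intro j
    have hre : ∀ (S : Fin c → Finset (Fin s)) (p : Fin c × Fin s),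
        A j p * restr S h p = restr S (g j) p := by
      intro S p
      by_cases hm : p.2 ∈ S p.1 <;> simp [restr, hm, hgdef]
    have hW' : 1 ≤ ω' j := by
      rw [hω' j]
      refine Finset.card_pos.2 ?_
      obtain ⟨p, hp⟩ := hrows j
      exact ⟨p.1, Finset.mem_filter.2 ⟨mem_univ _, ⟨p.2, by rwa [Prod.mk.eta]⟩⟩⟩
    have hb := row_bound c s τ hc hs hτ hτs (g j) (ω j) (ω' j) hW'
      (Finset.univ.filter fun p : Fin c × Fin s => A j p ≠ 0) (hω j).symm
      (fun p hp => Finset.mem_filter.2 ⟨mem_univ _, fun hA => hp (by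
        rw [hgdef]; simp [hA])⟩)
      (Finset.univ.filter fun l : Fin c => ∃ i : Fin s, A j (l, i) ≠ 0) (hω' j).symm
      (fun p hp => Finset.mem_filter.2 ⟨mem_univ _, ⟨p.2, fun hA => hp (by
        rw [hgdef]; simp only []; rw [show A j p = 0 from by rwa [← Prod.mk.eta (p := p)]];
        ring)⟩⟩)
    calc ∑ S ∈ samplings c s τ, (∑ p : Fin c × Fin s, A j p * restr S h p)^2
        = ∑ S ∈ samplings c s τ, (∑ p : Fin c × Fin s, restr S (g j) p)^2 := by
          refine Finset.sum_congr rfl fun S _ => ?_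
          rw [Finset.sum_congr rfl fun p _ => hre S p]
      _ ≤ N^c * ((τ:ℝ)/(s:ℝ)) * α j * ∑ p : Fin c × Fin s, (g j p)^2 := hb
  -- swap identity for the final sum
  have hswap : ∑ j : Fin n, α j * ∑ p : Fin c × Fin s, (g j p)^2
      = ∑ p : Fin c × Fin s, (∑ j : Fin n, α j * (A j p)^2) * (h p)^2 := by
    have e1 : ∀ j, ∑ p : Fin c × Fin s, (g j p)^2
        = ∑ p : Fin c × Fin s, (A j p)^2 * (h p)^2 := by
      intro j
      refine Finset.sum_congr rfl fun p _ => ?_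
      rw [hgdef]; ring
    rw [Finset.sum_congr rfl fun j _ => by rw [e1 j]]
    rw [Finset.sum_congr rfl fun j _ => (Finset.mul_sum _ _ _)]
    rw [Finset.sum_comm]
    refine Finset.sum_congr rfl fun p _ => ?_
    rw [Finset.sum_mul]
    refine Finset.sum_congr rfl fun j _ => by ring
  -- assemble
  have hmain : ∑ S ∈ samplings c s τ, f (x + restr S h)
      ≤ N^c * f x + ((τ:ℝ)/(s:ℝ)) * N^c * L h
        + (1/2) * (N^c * ((τ:ℝ)/(s:ℝ)) * ∑ j : Fin n, α j * ∑ p : Fin c × Fin s, (g j p)^2) := by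
    refine hstep.trans ?_
    rw [Finset.sum_add_distrib, Finset.sum_add_distrib, term1, term2, ← Finset.mul_sum,
      Finset.sum_comm]
    have : ∑ j : Fin n, ∑ S ∈ samplings c s τ,
        (∑ p : Fin c × Fin s, A j p * restr S h p)^2
        ≤ ∑ j : Fin n, N^c * ((τ:ℝ)/(s:ℝ)) * α j * ∑ p : Fin c × Fin s, (g j p)^2 :=
      Finset.sum_le_sum fun j _ => hrowj j
    have h2 : ∑ j : Fin n, N^c * ((τ:ℝ)/(s:ℝ)) * α j * ∑ p : Fin c × Fin s, (g j p)^2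
        = N^c * ((τ:ℝ)/(s:ℝ)) * ∑ j : Fin n, α j * ∑ p : Fin c × Fin s, (g j p)^2 := by
      rw [Finset.mul_sum]
      exact Finset.sum_congr rfl fun j _ => by ring
    nlinarith [this, h2]
  refine hmain.trans (le_of_eq ?_)
  rw [hswap]
  ring
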